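/- Let G be a group generated by elements g₁,…,gₙ together with the normal closure of the relations [gᵢˣ, gᵢʸ] = 1 for all i and all x, y ∈ G (i.e., G is a quotient of the free group on n generators by these relations, the free Milnor group). Then G is nilpotent of nilpotency class at most n. -/

import Mathlib

/-- The set of Milnor relators: commutators of two conjugates of the same generator. -/
def milnorRelators (n : ℕ) : Set (FreeGroup (Fin n)) :=
  {w | ∃ (i : Fin n) (x y : FreeGroup (Fin n)),
    w = (x⁻¹ * FreeGroup.of i * x)⁻¹ * (y⁻¹ * FreeGroup.of i * y)⁻¹ *
        (x⁻¹ * FreeGroup.of i * x) * (y⁻¹ * FreeGroup.of i * y)}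

/-- The free Milnor group on `n` generators. -/
def MilnorGroup (n : ℕ) : Type :=
  FreeGroup (Fin n) ⧸ Subgroup.normalClosure (milnorRelators n)

noncomputable instance (n : ℕ) : Group (MilnorGroup n) :=
  QuotientGroup.Quotient.group _

open scoped commutatorElement

/-! ### Auxiliary machinery -/

/-- The canonical projection to the Milnor group. -/
noncomputable def milnorMk (n : ℕ) : FreeGroup (Fin n) →* MilnorGroup n :=
  QuotientGroup.mk' _

lemma milnorMk_surjective (n : ℕ) : Function.Surjective (milnorMk n) :=
  QuotientGroup.mk'_surjective _

/-- A subgroup generated by pairwise commuting elements is abelian. -/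
lemma closure_commute {G : Type*} [Group G] {S : Set G}
    (hS : ∀ a ∈ S, ∀ b ∈ S, Commute a b) :
    ∀ x ∈ Subgroup.closure S, ∀ y ∈ Subgroup.closure S, Commute x y := by
  intro x hx
  refine Subgroup.closure_induction (fun a ha => ?_) ?_ ?_ ?_ hx
  · intro y hy
    refine Subgroup.closure_induction (fun b hb => hS a ha b hb) ?_ ?_ ?_ hy
    · exact Commute.one_right a
    · intro b c _ _ h1 h2; exact h1.mul_right h2
    · intro b _ h; exact h.inv_right
  · intro y _; exact Commute.one_left y
  · intro a b _ _ h1 h2 y hy; exact (h1 y hy).mul_left (h2 y hy)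
  · intro a _ h y hy; exact (h y hy).inv_left

/-- In any group, commuting conjugates of `a` are preserved by surjective homs. -/
lemma conj_commute_of_surjective {G H : Type*} [Group G] [Group H]
    (f : G →* H) (hf : Function.Surjective f) {a : G}
    (h : ∀ b ∈ conjugatesOf a, ∀ c ∈ conjugatesOf a, Commute b c) :
    ∀ b ∈ conjugatesOf (f a), ∀ c ∈ conjugatesOf (f a), Commute b c := by
  intro b hb c hc
  obtain ⟨u, rfl⟩ := isConj_iff.mp hb
  obtain ⟨v, rfl⟩ := isConj_iff.mp hc
  obtain ⟨u', rfl⟩ := hf u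
  obtain ⟨v', rfl⟩ := hf v
  have := h (u' * a * u'⁻¹) (isConj_iff.mpr ⟨u', rfl⟩)
    (v' * a * v'⁻¹) (isConj_iff.mpr ⟨v', rfl⟩)
  simpa [Commute, SemiconjBy, ← map_mul, ← map_inv] using congrArg f this

/-- Any two conjugates of a generator commute in the Milnor group. -/
lemma milnor_conj_commute (n : ℕ) (i : Fin n) :
    ∀ b ∈ conjugatesOf (milnorMk n (FreeGroup.of i)),
      ∀ c ∈ conjugatesOf (milnorMk n (FreeGroup.of i)), Commute b c := by
  have base : ∀ x y : FreeGroup (Fin n),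
      Commute (milnorMk n (x⁻¹ * FreeGroup.of i * x)) (milnorMk n (y⁻¹ * FreeGroup.of i * y)) := by
    intro x y
    have hrel : (x⁻¹ * FreeGroup.of i * x)⁻¹ * (y⁻¹ * FreeGroup.of i * y)⁻¹ *
        (x⁻¹ * FreeGroup.of i * x) * (y⁻¹ * FreeGroup.of i * y) ∈
        Subgroup.normalClosure (milnorRelators n) :=
      Subgroup.subset_normalClosure ⟨i, x, y, rfl⟩
    have h1 : milnorMk n ((x⁻¹ * FreeGroup.of i * x)⁻¹ * (y⁻¹ * FreeGroup.of i * y)⁻¹ *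
        (x⁻¹ * FreeGroup.of i * x) * (y⁻¹ * FreeGroup.of i * y)) = 1 := by
      exact (QuotientGroup.eq_one_iff _).mpr hrel
    set B := milnorMk n (x⁻¹ * FreeGroup.of i * x)
    set C := milnorMk n (y⁻¹ * FreeGroup.of i * y)
    have h2 : B⁻¹ * C⁻¹ * B * C = 1 := by
      simpa [B, C, map_mul, map_inv] using h1
    have h3 : ⁅B⁻¹, C⁻¹⁆ = 1 := by
      rw [commutatorElement_def]
      simpa using h2
    have := commutatorElement_eq_one_iff_commute.mp h3
    simpa using this.inv_inv
  intro b hb c hc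
  obtain ⟨u, rfl⟩ := isConj_iff.mp hb
  obtain ⟨v, rfl⟩ := isConj_iff.mp hc
  obtain ⟨u', rfl⟩ := milnorMk_surjective n u
  obtain ⟨v', rfl⟩ := milnorMk_surjective n v
  have := base u'⁻¹ v'⁻¹
  simpa [Commute, SemiconjBy, map_mul, map_inv, mul_assoc] using this

/-- A homomorphism from the free group whose generator images have pairwise
commuting conjugates kills the Milnor relators. -/
lemma normalClosure_le_ker (n : ℕ) {H : Type*} [Group H] (φ : FreeGroup (Fin n) →* H)
    (h : ∀ i : Fin n, ∀ b ∈ conjugatesOf (φ (FreeGroup.of i)),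
      ∀ c ∈ conjugatesOf (φ (FreeGroup.of i)), Commute b c) :
    Subgroup.normalClosure (milnorRelators n) ≤ φ.ker := by
  refine Subgroup.normalClosure_le_normal ?_
  rintro w ⟨i, x, y, rfl⟩
  rw [SetLike.mem_coe, MonoidHom.mem_ker]
  set a := φ (FreeGroup.of i)
  set B := φ (x⁻¹ * FreeGroup.of i * x)
  set C := φ (y⁻¹ * FreeGroup.of i * y)
  have hB : B ∈ conjugatesOf a :=
    isConj_iff.mpr ⟨(φ x)⁻¹, by simp [B, a, map_mul, map_inv, mul_assoc]⟩
  have hC : C ∈ conjugatesOf a :=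
    isConj_iff.mpr ⟨(φ y)⁻¹, by simp [C, a, map_mul, map_inv, mul_assoc]⟩
  have hcomm : Commute B C := h i B hB C hC
  have h3 : ⁅B⁻¹, C⁻¹⁆ = 1 := commutatorElement_eq_one_iff_commute.mpr hcomm.inv_inv
  rw [commutatorElement_def] at h3
  have : B⁻¹ * C⁻¹ * B * C = 1 := by simpa using h3
  calc φ ((x⁻¹ * FreeGroup.of i * x)⁻¹ * (y⁻¹ * FreeGroup.of i * y)⁻¹ *
      (x⁻¹ * FreeGroup.of i * x) * (y⁻¹ * FreeGroup.of i * y))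
      = B⁻¹ * C⁻¹ * B * C := by simp [B, C, map_mul, map_inv]
    _ = 1 := this

/-- The homomorphism `MilnorGroup (n+1) →* MilnorGroup n` killing generator `i`. -/
noncomputable def killHom (n : ℕ) (i : Fin (n + 1)) : MilnorGroup (n + 1) →* MilnorGroup n :=
  QuotientGroup.lift _
    (FreeGroup.lift fun j => (finSuccEquiv' i j).elim 1 fun k => milnorMk n (FreeGroup.of k))
    (by
      apply normalClosure_le_ker
      intro j
      rw [FreeGroup.lift_apply_of]
      rcases h : finSuccEquiv' i j with _ | k
      · simp only [h, Option.elim]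
        intro b hb c hc
        rw [isConj_one_right.mp hb, isConj_one_right.mp hc]
      · simp only [h, Option.elim]
        exact milnor_conj_commute n k)

lemma killHom_of (n : ℕ) (i : Fin (n + 1)) (j : Fin (n + 1)) :
    killHom n i (milnorMk (n + 1) (FreeGroup.of j)) =
      (finSuccEquiv' i j).elim 1 fun k => milnorMk n (FreeGroup.of k) := by
  have h1 : killHom n i (milnorMk (n + 1) (FreeGroup.of j)) =
      FreeGroup.lift (fun j => (finSuccEquiv' i j).elim 1 fun k => milnorMk n (FreeGroup.of k))
        (FreeGroup.of j) := rfl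
  rw [h1, FreeGroup.lift_apply_of]

/-- The normal closure of the `i`-th generator. -/
noncomputable def milnorN (n : ℕ) (i : Fin n) : Subgroup (MilnorGroup n) :=
  Subgroup.normalClosure {milnorMk n (FreeGroup.of i)}

instance (n : ℕ) (i : Fin n) : (milnorN n i).Normal :=
  Subgroup.normalClosure_normal

noncomputable def milnorProj (n : ℕ) (i : Fin n) :
    MilnorGroup n →* MilnorGroup n ⧸ milnorN n i :=
  QuotientGroup.mk' _

lemma milnorProj_ker (n : ℕ) (i : Fin n) : (milnorProj n i).ker = milnorN n i :=
  QuotientGroup.ker_mk' _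

lemma milnorProj_eq_one {n : ℕ} {i : Fin n} {x : MilnorGroup n} (hx : x ∈ milnorN n i) :
    milnorProj n i x = 1 := by
  rw [← MonoidHom.mem_ker, milnorProj_ker]
  exact hx

/-- The section witnessing that killing generator `i` has kernel inside `milnorN`. -/
noncomputable def sectionHom (n : ℕ) (i : Fin (n + 1)) :
    MilnorGroup n →* MilnorGroup (n + 1) ⧸ milnorN (n + 1) i :=
  QuotientGroup.lift _
    (FreeGroup.lift fun k => milnorProj (n + 1) i (milnorMk (n + 1) (FreeGroup.of (i.succAbove k))))
    (by
      apply normalClosure_le_ker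
      intro k
      rw [FreeGroup.lift_apply_of]
      exact conj_commute_of_surjective (milnorProj (n + 1) i)
        (QuotientGroup.mk'_surjective _) (milnor_conj_commute (n + 1) (i.succAbove k)))

lemma sectionHom_of (n : ℕ) (i : Fin (n + 1)) (k : Fin n) :
    sectionHom n i (milnorMk n (FreeGroup.of k)) =
      milnorProj (n + 1) i (milnorMk (n + 1) (FreeGroup.of (i.succAbove k))) := by
  have h1 : sectionHom n i (milnorMk n (FreeGroup.of k)) =
      FreeGroup.lift (fun k => milnorProj (n + 1) i
        (milnorMk (n + 1) (FreeGroup.of (i.succAbove k)))) (FreeGroup.of k) := rfl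
  rw [h1, FreeGroup.lift_apply_of]

lemma sectionHom_killHom (n : ℕ) (i : Fin (n + 1)) (x : MilnorGroup (n + 1)) :
    sectionHom n i (killHom n i x) = milnorProj (n + 1) i x := by
  obtain ⟨w, rfl⟩ := milnorMk_surjective (n + 1) x
  have : (sectionHom n i).comp ((killHom n i).comp (milnorMk (n + 1))) =
      (milnorProj (n + 1) i).comp (milnorMk (n + 1)) := by
    apply FreeGroup.ext_hom
    intro j
    simp only [MonoidHom.comp_apply]
    rcases h : finSuccEquiv' i j with _ | k
    · rw [killHom_of, h]
      simp only [Option.elim, map_one]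
      have hj : j = i := by
        simpa [finSuccEquiv'_symm_none] using congrArg (finSuccEquiv' i).symm h
      subst hj
      exact (milnorProj_eq_one (Subgroup.subset_normalClosure rfl)).symm
    · rw [killHom_of, h]
      simp only [Option.elim]
      rw [sectionHom_of]
      have hj : i.succAbove k = j := by
        have := congrArg (finSuccEquiv' i).symm h
        simp only [Equiv.symm_apply_apply, finSuccEquiv'_symm_some] at this
        exact this.symm
      rw [hj]
  exact DFunLike.congr_fun this w

/-- The kernel of `killHom` is contained in the normal closure of the killed generator. -/
lemma killHom_ker_le (n : ℕ) (i : Fin (n + 1)) :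
    (killHom n i).ker ≤ milnorN (n + 1) i := by
  intro x hx
  rw [MonoidHom.mem_ker] at hx
  have h1 : milnorProj (n + 1) i x = 1 := by rw [← sectionHom_killHom, hx, map_one]
  rw [← milnorProj_ker, MonoidHom.mem_ker]
  exact h1

/-- Generators of the Milnor group. -/
lemma milnor_top_eq_closure (n : ℕ) :
    Subgroup.closure (Set.range fun i : Fin n => milnorMk n (FreeGroup.of i)) = ⊤ := by
  have h1 : Subgroup.map (milnorMk n) ⊤ = ⊤ :=
    Subgroup.map_top_of_surjective _ (milnorMk_surjective n)
  rw [← FreeGroup.closure_range_of (Fin n), MonoidHom.map_closure] at h1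
  rw [← h1]
  congr 1
  ext x
  simp [Set.range_comp]

lemma freeGroup_fin_zero_eq_one (w : FreeGroup (Fin 0)) : w = 1 := by
  induction w using FreeGroup.induction_on with
  | C1 => rfl
  | of i => exact i.elim0
  | inv_of w hw => rw [hw, inv_one]
  | mul u v hu hv => rw [hu, hv, one_mul]

theorem milnorGroup_nilpotent_aux : ∀ n : ℕ, (⊤ : Subgroup (MilnorGroup n)).lowerCentralSeries n = ⊥ := by
  intro n
  induction n with
  | zero =>
    rw [Subgroup.lowerCentralSeries_zero, eq_bot_iff]
    intro x _
    obtain ⟨w, rfl⟩ := milnorMk_surjective 0 x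
    rw [freeGroup_fin_zero_eq_one w, map_one]
    exact Subgroup.one_mem ⊥
  | succ n ih =>
    -- every element of γ_n is central
    have central : ∀ x ∈ (⊤ : Subgroup (MilnorGroup (n + 1))).lowerCentralSeries n,
        ∀ y : MilnorGroup (n + 1), Commute x y := by
      intro x hx
      -- x commutes with each generator
      have hgen : ∀ i : Fin (n + 1), Commute x (milnorMk (n + 1) (FreeGroup.of i)) := by
        intro i
        -- x ∈ N_i
        have hker : x ∈ (killHom n i).ker := by
          rw [MonoidHom.mem_ker, ← eq_bot_iff.mp ih]
          exact Subgroup.lowerCentralSeries.map (killHom n i) n ⟨x, hx, rfl⟩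
        have hN : x ∈ Subgroup.normalClosure {milnorMk (n + 1) (FreeGroup.of i)} :=
          killHom_ker_le n i hker
        have habel := closure_commute (S := Group.conjugatesOfSet
            {milnorMk (n + 1) (FreeGroup.of i)}) ?_
        · exact habel x hN (milnorMk (n + 1) (FreeGroup.of i))
            (Subgroup.subset_normalClosure rfl)
        · intro a ha b hb
          rw [Group.mem_conjugatesOfSet_iff] at ha hb
          obtain ⟨a', ha', haa⟩ := ha
          obtain ⟨b', hb', hbb⟩ := hb
          rw [Set.mem_singleton_iff] at ha' hb'
          subst ha'; subst hb'
          exact milnor_conj_commute (n + 1) i a haa b hbb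
      intro y
      have hy : y ∈ Subgroup.closure
          (Set.range fun i : Fin (n + 1) => milnorMk (n + 1) (FreeGroup.of i)) := by
        rw [milnor_top_eq_closure]; trivial
      refine Subgroup.closure_induction (fun a ⟨i, hi⟩ => hi ▸ hgen i) ?_ ?_ ?_ hy
      · exact Commute.one_right x
      · intro a b _ _ h1 h2; exact h1.mul_right h2
      · intro a _ h; exact h.inv_right
    rw [Subgroup.lowerCentralSeries_succ, eq_bot_iff]
    rw [Subgroup.commutator_def, Subgroup.closure_le]
    rintro x ⟨p, hp, q, -, rfl⟩
    have hc : Commute p q := central p hp q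
    simp only [SetLike.mem_coe, Subgroup.mem_bot]
    exact commutatorElement_eq_one_iff_commute.mpr hc

/-- The free Milnor group on `n` generators is nilpotent of class at most `n`:
the `(n+1)`-st term of its lower central series (which is `lowerCentralSeries _ n`
in Mathlib's indexing, where `lowerCentralSeries G 0 = ⊤`) is trivial. -/
theorem milnorGroup_nilpotent (n : ℕ) :
    (⊤ : Subgroup (MilnorGroup n)).lowerCentralSeries n = ⊥ := by
  exact milnorGroup_nilpotent_aux n
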